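/- Let G be a random vector in ℝⁿ with mean g, variance E[‖G−g‖²] ≤ s², and suppose ‖g‖ ≤ λ/2 for some λ > 0. Let G̃ = clip(G, λ). Then the bias satisfies ‖E[G̃] − g‖ ≤ 4s²/(λ). -/

import Mathlib

open MeasureTheory

theorem clipped_bias_bound (n : ℕ) {Ω : Type*} [MeasureSpace Ω]
    (μ : Measure Ω) [IsProbabilityMeasure μ]
    (G : Ω → EuclideanSpace ℝ (Fin n)) (g : EuclideanSpace ℝ (Fin n)) (s lam : ℝ)
    (hG : Integrable G μ) (hmean : (∫ ω, G ω ∂μ) = g)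
    (hsq : Integrable (fun ω => ‖G ω - g‖ ^ 2) μ)
    (hvar : (∫ ω, ‖G ω - g‖ ^ 2 ∂μ) ≤ s ^ 2)
    (hlam : 0 < lam) (hg : ‖g‖ ≤ lam / 2)
    (Gclip : Ω → EuclideanSpace ℝ (Fin n))
    (hclip : ∀ ω, Gclip ω = (min 1 (lam / ‖G ω‖)) • G ω)
    (hclipInt : Integrable Gclip μ) :
    ‖(∫ ω, Gclip ω ∂μ) - g‖ ≤ 4 * s ^ 2 / lam := by
  have key : ∀ ω, ‖Gclip ω - G ω‖ ≤ 4 * ‖G ω - g‖ ^ 2 / lam := by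
    intro ω
    rw [hclip ω]
    by_cases h : ‖G ω‖ ≤ lam
    · rcases eq_or_lt_of_le (norm_nonneg (G ω)) with h0 | h0
      · have hz : G ω = 0 := by
          have := h0.symm
          rwa [norm_eq_zero] at this
        rw [hz]
        simp
        positivity
      · have : (1 : ℝ) ≤ lam / ‖G ω‖ := (one_le_div h0).2 h
        rw [min_eq_left this, one_smul, sub_self, norm_zero]
        positivity
    · push_neg at h
      have hpos : (0 : ℝ) < ‖G ω‖ := lt_trans hlam h
      have hmin : min (1 : ℝ) (lam / ‖G ω‖) = lam / ‖G ω‖ :=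
        min_eq_right (le_of_lt ((div_lt_one hpos).2 h))
      rw [hmin]
      have : (lam / ‖G ω‖) • G ω - G ω = (lam / ‖G ω‖ - 1) • G ω := by
        rw [sub_smul, one_smul]
      rw [this, norm_smul, Real.norm_eq_abs]
      have hle : lam / ‖G ω‖ - 1 ≤ 0 := by
        have := (div_lt_one hpos).2 h
        linarith
      rw [abs_of_nonpos hle]
      have hd : -(lam / ‖G ω‖ - 1) * ‖G ω‖ = ‖G ω‖ - lam := by
        field_simp
        ring
      rw [hd]
      have htri : ‖G ω‖ ≤ ‖G ω - g‖ + ‖g‖ := by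
        have := norm_sub_norm_le (G ω) g
        linarith [abs_le.1 (abs_norm_sub_norm_le (G ω) g)]
      have ht : ‖G ω‖ ≤ ‖G ω - g‖ + lam / 2 := by linarith
      have ht2 : lam / 2 ≤ ‖G ω - g‖ := by linarith
      rw [le_div_iff₀ hlam]
      nlinarith [norm_nonneg (G ω - g)]
  have hsub : Integrable (fun ω => Gclip ω - G ω) μ := hclipInt.sub hG
  have h1 : ‖(∫ ω, Gclip ω ∂μ) - g‖ = ‖∫ ω, (Gclip ω - G ω) ∂μ‖ := by
    rw [integral_sub hclipInt hG, hmean]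
  rw [h1]
  have h2 : ‖∫ ω, (Gclip ω - G ω) ∂μ‖ ≤ ∫ ω, ‖Gclip ω - G ω‖ ∂μ :=
    norm_integral_le_integral_norm _
  have hInt2 : Integrable (fun ω => 4 * ‖G ω - g‖ ^ 2 / lam) μ := by
    exact (hsq.const_mul 4).div_const lam
  have h3 : ∫ ω, ‖Gclip ω - G ω‖ ∂μ ≤ ∫ ω, 4 * ‖G ω - g‖ ^ 2 / lam ∂μ :=
    integral_mono hsub.norm hInt2 key
  have h4 : ∫ ω, 4 * ‖G ω - g‖ ^ 2 / lam ∂μ = 4 * (∫ ω, ‖G ω - g‖ ^ 2 ∂μ) / lam := by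
    rw [integral_div, integral_const_mul]
  have h5 : 4 * (∫ ω, ‖G ω - g‖ ^ 2 ∂μ) / lam ≤ 4 * s ^ 2 / lam := by
    gcongr
  calc ‖∫ ω, (Gclip ω - G ω) ∂μ‖ ≤ ∫ ω, ‖Gclip ω - G ω‖ ∂μ := h2
    _ ≤ ∫ ω, 4 * ‖G ω - g‖ ^ 2 / lam ∂μ := h3
    _ = 4 * (∫ ω, ‖G ω - g‖ ^ 2 ∂μ) / lam := h4
    _ ≤ 4 * s ^ 2 / lam := h5
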